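/- Let (q_k)_{k≥1} and α_{k,i} be as in the four-species coefficient setup. Then for every k ≥ 1: α_{k+1,0} = 0; α_{k+1,1} = 2·Σ_{j=1}^{3k+1} α_{k,j}/(j+1); α_{k+1,2} = (3/2)·α_{k,1} − Σ_{j=1}^{3k+1} α_{k,j}/(j+1); α_{k+1,3} = −2·α_{k,1} + (4/3)·α_{k,2}; and for every i ≥ 4, α_{k+1,i} = ((i+1)/i)·α_{k,i−1} − ((i+1)/(i−1))·α_{k,i−2} + (1/3)·((i+1)/(i−2))·α_{k,i−3}. -/

import Mathlib

open MeasureTheory Polynomial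

variable {R : Type*} [Field R]

noncomputable def pint {R : Type*} [Field R] (p : R[X]) : R[X] :=
  p.sum fun n a => C (a / (n + 1)) * X ^ (n + 1)


theorem pint_coeff (p : R[X]) (n : ℕ) :
    (pint p).coeff n = if n = 0 then 0 else p.coeff (n - 1) / n := by
  rw [pint, Polynomial.coeff_sum]
  rcases Nat.eq_zero_or_pos n with h | h
  · subst h
    simp [Polynomial.sum, coeff_X_pow]
  · obtain ⟨m, rfl⟩ := Nat.exists_eq_add_of_le h
    rw [Polynomial.sum]
    simp only [coeff_C_mul, coeff_X_pow]
    rw [Finset.sum_eq_single m]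
    · simp [Nat.add_comm 1 m]
    · intro b _ hb
      rw [if_neg, mul_zero]
      omega
    · intro hm
      rw [Polynomial.notMem_support_iff] at hm
      simp [hm]

theorem pint_coeff_succ (p : R[X]) (n : ℕ) :
    (pint p).coeff (n + 1) = p.coeff n / (n + 1) := by
  simp [pint_coeff]

theorem pint_map {S : Type*} [Field S] (f : R →+* S) (p : R[X]) :
    (pint p).map f = pint (p.map f) := by
  ext n
  rw [coeff_map, pint_coeff, pint_coeff, coeff_map]
  split
  · simp
  · rw [map_div₀, map_natCast]

theorem derivative_pint [CharZero R] (p : R[X]) : derivative (pint p) = p := by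
  ext n
  rw [coeff_derivative, pint_coeff_succ]
  have : ((n : R) + 1) ≠ 0 := Nat.cast_add_one_ne_zero n
  field_simp

theorem pint_eval_zero (p : R[X]) : (pint p).eval 0 = 0 := by
  rw [← Polynomial.coeff_zero_eq_eval_zero, pint_coeff]; simp

theorem pint_integral (g : ℝ[X]) (a b : ℝ) :
    ∫ t in a..b, Polynomial.eval t g = (pint g).eval b - (pint g).eval a := by
  refine intervalIntegral.integral_eq_sub_of_hasDerivAt
    (f := fun t => (pint g).eval t) (f' := fun t => g.eval t) (fun x _ => ?_) ?_
  · simpa [derivative_pint] using (pint g).hasDerivAt x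
  · exact (Polynomial.continuous g).intervalIntegrable a b

theorem intervalIntegrable_indicator' (f : ℝ → ℝ) (hf : Continuous f) (s : Set ℝ)
    (hs : MeasurableSet s) (a b : ℝ) :
    IntervalIntegrable (s.indicator f) volume a b := by
  rw [intervalIntegrable_iff]
  exact (hf.integrableOn_uIoc).indicator hs

theorem integral_ite_lt_right (f : ℝ → ℝ) (hf : Continuous f) {c : ℝ} (h0 : 0 ≤ c)
    (h1 : c ≤ 1) :
    (∫ t in (0:ℝ)..1, if c < t then f t else 0) = ∫ t in c..1, f t := by
  have hi : ∀ u v : ℝ, IntervalIntegrable (fun t => if c < t then f t else 0) volume u v := by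
    intro u v
    have he : (fun t : ℝ => if c < t then f t else 0) = (Set.Ioi c).indicator f := by
      funext t; simp [Set.indicator_apply, Set.mem_Ioi]
    rw [he]
    exact intervalIntegrable_indicator' f hf _ measurableSet_Ioi u v
  rw [← intervalIntegral.integral_add_adjacent_intervals (hi 0 c) (hi c 1)]
  have h2 : (∫ t in (0:ℝ)..c, if c < t then f t else 0) = 0 := by
    rw [intervalIntegral.integral_congr (g := fun _ => (0:ℝ))]
    · simp
    · intro t ht
      rw [Set.uIcc_of_le h0] at ht
      simp [not_lt.2 ht.2]
  have h3 : (∫ t in c..1, if c < t then f t else 0) = ∫ t in c..1, f t := by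
    refine intervalIntegral.integral_congr_ae (Filter.Eventually.of_forall fun t ht => ?_)
    rw [Set.uIoc_of_le h1] at ht
    simp [ht.1]
  rw [h2, h3, zero_add]

theorem intervalIntegrable_ite_lt_left (f : ℝ → ℝ) (hf : Continuous f) (c u v : ℝ) :
    IntervalIntegrable (fun t => if t < c then f t else 0) volume u v := by
  have he : (fun t : ℝ => if t < c then f t else 0) = (Set.Iio c).indicator f := by
    funext t; simp [Set.indicator_apply, Set.mem_Iio]
  rw [he]
  exact intervalIntegrable_indicator' f hf _ measurableSet_Iio u v

theorem ae_ne_real (c : ℝ) : ∀ᵐ t : ℝ, t ≠ c := by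
  simp [MeasureTheory.ae_iff]

theorem integral_ite_lt_left (f : ℝ → ℝ) (hf : Continuous f) {c : ℝ} (h0 : 0 ≤ c)
    (h1 : c ≤ 1) :
    (∫ t in (0:ℝ)..1, if t < c then f t else 0) = ∫ t in (0:ℝ)..c, f t := by
  have hi : ∀ u v : ℝ, IntervalIntegrable (fun t => if t < c then f t else 0) volume u v := by
    intro u v
    have he : (fun t : ℝ => if t < c then f t else 0) = (Set.Iio c).indicator f := by
      funext t; simp [Set.indicator_apply, Set.mem_Iio]
    rw [he]
    exact intervalIntegrable_indicator' f hf _ measurableSet_Iio u v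
  rw [← intervalIntegral.integral_add_adjacent_intervals (hi 0 c) (hi c 1)]
  have h3 : (∫ t in c..1, if t < c then f t else 0) = 0 := by
    rw [intervalIntegral.integral_congr (g := fun _ => (0:ℝ))]
    · simp
    · intro t ht
      rw [Set.uIcc_of_le h1] at ht
      simp [not_lt.2 ht.1]
  have h2 : (∫ t in (0:ℝ)..c, if t < c then f t else 0) = ∫ t in (0:ℝ)..c, f t := by
    refine intervalIntegral.integral_congr_ae ?_
    filter_upwards [ae_ne_real c] with t htc ht
    rw [Set.uIoc_of_le h0] at ht
    have : t < c := lt_of_le_of_ne ht.2 htc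
    simp [this]
  rw [h2, h3, add_zero]

theorem pint_add (p q : R[X]) : pint (p + q) = pint p + pint q := by
  ext n
  simp only [pint_coeff, coeff_add]
  split <;> simp [add_div]

theorem pint_sub (p q : R[X]) : pint (p - q) = pint p - pint q := by
  ext n
  simp only [pint_coeff, coeff_sub]
  split <;> simp [sub_div]

theorem pint_C_mul (a : R) (p : R[X]) : pint (C a * p) = C a * pint p := by
  ext n
  simp only [pint_coeff, coeff_C_mul]
  split <;> simp [mul_div_assoc]

theorem pint_C (a : R) : pint (C a) = C a * X := by
  ext n
  rcases n with _ | _ | n <;> simp [pint_coeff, coeff_X]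

theorem pint_one : pint (1 : R[X]) = X := by
  ext n
  rcases n with _ | _ | n <;> simp [pint_coeff, coeff_one, coeff_X]

theorem pint_X : pint (X : R[X]) = C (1/2 : R) * X ^ 2 := by
  ext n
  rcases n with _ | _ | _ | n <;> simp [pint_coeff, coeff_X_pow, coeff_X]

noncomputable def PP (p : R[X]) : R[X] :=
  p * pint (pint (1 - X)) + pint (p * pint (1 - X)) + pint (pint (p * (1 - X)))
    + C ((pint p).eval 1 / 2) * X ^ 2 - pint (pint (pint p))
    + (1 - X) * (p * pint (1 - X) + pint (p * (1 - X)) + C ((pint p).eval 1) * X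
        - pint (pint p))
    + pint (1 - X) * (C ((pint p).eval 1) - pint p)

theorem PP_def {R : Type*} [Field R] (p : R[X]) : PP p =
  p * pint (pint (1 - X)) + pint (p * pint (1 - X)) + pint (pint (p * (1 - X)))
    + C ((pint p).eval 1 / 2) * X ^ 2 - pint (pint (pint p))
    + (1 - X) * (p * pint (1 - X) + pint (p * (1 - X)) + C ((pint p).eval 1) * X
        - pint (pint p))
    + pint (1 - X) * (C ((pint p).eval 1) - pint p) := rfl

theorem integral_ite_piecewise (g h : ℝ[X]) {x : ℝ} (h0 : 0 ≤ x) (h1 : x ≤ 1) :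
    (∫ t in (0:ℝ)..1, if t < x then Polynomial.eval t g else Polynomial.eval t h)
      = (pint g).eval x + ((pint h).eval 1 - (pint h).eval x) := by
  have he : ∀ t : ℝ, (if t < x then Polynomial.eval t g else Polynomial.eval t h)
      = Polynomial.eval t h + (if t < x then Polynomial.eval t (g - h) else 0) := by
    intro t; by_cases ht : t < x <;> simp [ht]
  simp only [he]
  rw [intervalIntegral.integral_add (h.continuous.intervalIntegrable 0 1)
    (intervalIntegrable_ite_lt_left _ ((g - h).continuous) x 0 1),
    pint_integral, integral_ite_lt_left _ ((g - h).continuous) h0 h1, pint_integral,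
    pint_sub]
  simp [pint_eval_zero]
  ring

theorem key (p : ℝ[X]) {x : ℝ} (hx : x ∈ Set.Icc (0:ℝ) 1) :
    (∫ ξ₁ in (0:ℝ)..1, ∫ ξ₂ in (0:ℝ)..1, ∫ ξ₃ in (0:ℝ)..1,
      if ξ₂ < min ξ₁ (min ξ₃ x) then
        Polynomial.eval x p + Polynomial.eval ξ₁ p + Polynomial.eval ξ₂ p
          + Polynomial.eval ξ₃ p
      else 0) = Polynomial.eval x (PP p) := by
  obtain ⟨hx0, hx1⟩ := hx
  set J : ℝ[X] := pint p with hJ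
  set A1 : ℝ := (pint p).eval 1 with hA1
  set Ue : ℝ[X] := pint (1 - X) with hUe
  set T : ℝ[X] := pint (p * (1 - X)) with hT
  set K : ℝ[X] := pint (pint p) with hK
  -- inner integral
  have inner : ∀ ξ₁ ξ₂ : ℝ, ξ₂ ∈ Set.Icc (0:ℝ) 1 →
      (∫ ξ₃ in (0:ℝ)..1, if ξ₂ < min ξ₁ (min ξ₃ x) then
          Polynomial.eval x p + Polynomial.eval ξ₁ p + Polynomial.eval ξ₂ p
            + Polynomial.eval ξ₃ p else 0)
        = if ξ₂ < min ξ₁ x then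
            Polynomial.eval ξ₂ (C (Polynomial.eval x p + Polynomial.eval ξ₁ p) * (1 - X)
              + p * (1 - X) + C A1 - J) else 0 := by
    intro ξ₁ ξ₂ hξ₂
    by_cases hc : ξ₂ < min ξ₁ x
    · rw [if_pos hc]
      have h1 : ξ₂ < ξ₁ := (lt_min_iff.1 hc).1
      have h2 : ξ₂ < x := (lt_min_iff.1 hc).2
      have congr1 : ∀ ξ₃ : ℝ, (if ξ₂ < min ξ₁ (min ξ₃ x) then
          Polynomial.eval x p + Polynomial.eval ξ₁ p + Polynomial.eval ξ₂ p
            + Polynomial.eval ξ₃ p else 0)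
          = (if ξ₂ < ξ₃ then Polynomial.eval ξ₃
              (C (Polynomial.eval x p + Polynomial.eval ξ₁ p + Polynomial.eval ξ₂ p) + p)
            else 0) := by
        intro ξ₃
        by_cases h3 : ξ₂ < ξ₃
        · rw [if_pos (lt_min_iff.2 ⟨h1, lt_min_iff.2 ⟨h3, h2⟩⟩), if_pos h3]
          simp only [eval_add, eval_C]
        · rw [if_neg h3, if_neg (fun hcc => h3 (lt_min_iff.1 (lt_min_iff.1 hcc).2).1)]
      simp only [congr1]
      rw [integral_ite_lt_right _ (by exact (C (Polynomial.eval x p + Polynomial.eval ξ₁ p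
            + Polynomial.eval ξ₂ p) + p).continuous) hξ₂.1 hξ₂.2,
        pint_integral, pint_add, pint_C]
      simp only [hJ, hA1, eval_add, eval_sub, eval_mul, eval_C, eval_X, eval_one]
      ring
    · rw [if_neg hc]
      have congr0 : ∀ ξ₃ : ℝ, (if ξ₂ < min ξ₁ (min ξ₃ x) then
          Polynomial.eval x p + Polynomial.eval ξ₁ p + Polynomial.eval ξ₂ p
            + Polynomial.eval ξ₃ p else 0) = 0 := by
        intro ξ₃
        rw [if_neg]
        intro hcc
        exact hc (lt_min_iff.2 ⟨(lt_min_iff.1 hcc).1, (lt_min_iff.1 (lt_min_iff.1 hcc).2).2⟩)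
      simp only [congr0]
      simp
  -- middle integral
  have middle : ∀ ξ₁ : ℝ, ξ₁ ∈ Set.Icc (0:ℝ) 1 →
      (∫ ξ₂ in (0:ℝ)..1, ∫ ξ₃ in (0:ℝ)..1, if ξ₂ < min ξ₁ (min ξ₃ x) then
          Polynomial.eval x p + Polynomial.eval ξ₁ p + Polynomial.eval ξ₂ p
            + Polynomial.eval ξ₃ p else 0)
        = Polynomial.eval (min ξ₁ x)
            (C (Polynomial.eval x p + Polynomial.eval ξ₁ p) * Ue + T + C A1 * X - K) := by
    intro ξ₁ hξ₁
    rw [intervalIntegral.integral_congr (g := fun ξ₂ => if ξ₂ < min ξ₁ x then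
        Polynomial.eval ξ₂ (C (Polynomial.eval x p + Polynomial.eval ξ₁ p) * (1 - X)
          + p * (1 - X) + C A1 - J) else 0)
      (fun ξ₂ hξ₂ => inner ξ₁ ξ₂ (by rwa [Set.uIcc_of_le zero_le_one] at hξ₂))]
    rw [integral_ite_lt_left _ (by exact (C (Polynomial.eval x p + Polynomial.eval ξ₁ p)
        * (1 - X) + p * (1 - X) + C A1 - J).continuous)
      (le_min hξ₁.1 hx0) ((min_le_left _ _).trans hξ₁.2)]
    rw [pint_integral]
    simp only [hJ, hA1, hUe, hT, hK, pint_add, pint_sub, pint_C_mul, pint_C, pint_X,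
      pint_one, eval_add, eval_sub, eval_mul, eval_pow, eval_C, eval_X, eval_one,
      pint_eval_zero]
    ring
  -- outer integral
  rw [intervalIntegral.integral_congr (g := fun ξ₁ => if ξ₁ < x then
      Polynomial.eval ξ₁ (C (Polynomial.eval x p) * Ue + p * Ue + T + C A1 * X - K)
    else Polynomial.eval ξ₁ (C (Polynomial.eval x
        (C (Polynomial.eval x p) * Ue + T + C A1 * X - K)) + C (Polynomial.eval x Ue) * p))
    (fun ξ₁ hξ₁ => ?_)]
  swap
  · rw [Set.uIcc_of_le zero_le_one] at hξ₁
    rw [middle ξ₁ hξ₁]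
    beta_reduce
    by_cases hlt : ξ₁ < x
    · rw [if_pos hlt, min_eq_left hlt.le]
      simp only [eval_add, eval_sub, eval_mul, eval_C, eval_X, eval_one]
      ring
    · rw [if_neg hlt, min_eq_right (not_lt.1 hlt)]
      simp only [eval_add, eval_sub, eval_mul, eval_C, eval_X, eval_one]
      ring
  rw [integral_ite_piecewise _ _ hx0 hx1]
  simp only [PP, hJ, hA1, hUe, hT, hK, pint_add, pint_sub, pint_C_mul, pint_C, pint_X,
    pint_one, eval_add, eval_sub, eval_mul, eval_pow, eval_C, eval_X, eval_one,
    pint_eval_zero]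
  ring

theorem pint_one_sub : pint ((1:ℚ[X]) - X) = X - C (1/2:ℚ) * X^2 := by
  rw [pint_sub, pint_one, pint_X]

theorem pint_X_sq : pint ((X:ℚ[X])^2) = C (1/3:ℚ) * X^3 := by
  ext n
  rcases n with _|_|_|_|n <;> simp [pint_coeff, coeff_X_pow] <;> norm_num

theorem pint_W : pint ((X:ℚ[X]) - C (1/2:ℚ) * X^2) = C (1/2:ℚ) * X^2 - C (1/6:ℚ) * X^3 := by
  rw [pint_sub, pint_X, pint_C_mul, pint_X_sq,
    show (C (1/2:ℚ)) * (C (1/3:ℚ) * X^3) = C (1/6:ℚ) * X^3 by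
      rw [← mul_assoc, ← C_mul]; norm_num]

theorem PP_eq (p : ℚ[X]) :
    PP p =
      C (1/2:ℚ) * (p * X^2) - C (1/6:ℚ) * (p * X^3)
      + pint (p * X^1 - C (1/2:ℚ) * (p * X^2))
      + pint (pint (p - p * X^1))
      + C ((pint p).eval 1 / 2) * X^2
      - pint (pint (pint p))
      + ((p * X^1 - C (1/2:ℚ) * (p * X^2) + pint (p - p * X^1) + C ((pint p).eval 1) * X
          - pint (pint p))
        - (p * X^1 - C (1/2:ℚ) * (p * X^2) + pint (p - p * X^1) + C ((pint p).eval 1) * X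
          - pint (pint p)) * X^1)
      + (C ((pint p).eval 1) * X - C (1/2:ℚ) * (C ((pint p).eval 1) * X^2) - pint p * X^1
          + C (1/2:ℚ) * (pint p * X^2)) := by
  have e1 : p * ((X:ℚ[X]) - C (1/2:ℚ) * X^2) = p * X^1 - C (1/2:ℚ) * (p * X^2) := by ring
  have e2 : p * ((1:ℚ[X]) - X) = p - p * X^1 := by ring
  rw [PP_def, pint_one_sub, pint_W, e1, e2]
  ring

example (p : ℚ[X]) : (PP p).coeff 0 = 0 := by
  simp [PP_eq, coeff_mul_X_pow', pint_coeff]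

theorem PP_coeff_zero (p : ℚ[X]) : (PP p).coeff 0 = 0 := by
  simp [PP_eq, coeff_mul_X_pow', pint_coeff]

theorem PP_coeff_one (p : ℚ[X]) :
    (PP p).coeff 1 = 2 * (pint p).eval 1 + 2 * p.coeff 0 := by
  simp [PP_eq, coeff_add, coeff_sub, coeff_C_mul, coeff_mul_X_pow', pint_coeff, coeff_X,
    coeff_X_pow]
  ring

theorem PP_coeff_two (p : ℚ[X]) :
    (PP p).coeff 2 = 3/2 * p.coeff 1 - (pint p).eval 1 - 3 * p.coeff 0 := by
  simp [PP_eq, coeff_add, coeff_sub, coeff_C_mul, coeff_mul_X_pow', pint_coeff, coeff_X,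
    coeff_X_pow]
  ring

theorem PP_coeff_three (p : ℚ[X]) :
    (PP p).coeff 3 = -2 * p.coeff 1 + 4/3 * p.coeff 2 + 4/3 * p.coeff 0 := by
  simp [PP_eq, coeff_add, coeff_sub, coeff_C_mul, coeff_mul_X_pow', pint_coeff, coeff_X,
    coeff_X_pow]
  ring

theorem PP_coeff_ge (p : ℚ[X]) (m : ℕ) :
    (PP p).coeff (m + 4) =
      ((m:ℚ) + 5) / ((m:ℚ) + 4) * p.coeff (m + 3)
        - ((m:ℚ) + 5) / ((m:ℚ) + 3) * p.coeff (m + 2)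
        + 1/3 * (((m:ℚ) + 5) / ((m:ℚ) + 2)) * p.coeff (m + 1) := by
  simp [PP_eq, coeff_add, coeff_sub, coeff_C_mul, coeff_mul_X_pow', pint_coeff, coeff_X,
    coeff_X_pow, show (1:ℕ) ≤ m + 4 by omega, show (2:ℕ) ≤ m + 4 by omega,
    show (3:ℕ) ≤ m + 4 by omega, show m + 4 - 1 = m + 3 by omega,
    show m + 4 - 2 = m + 2 by omega, show m + 4 - 3 = m + 1 by omega,
    show m + 3 - 1 = m + 2 by omega, show m + 2 - 1 = m + 1 by omega,
    show m + 4 ≠ 0 by omega, show m + 3 ≠ 0 by omega, show m + 2 ≠ 0 by omega,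
    show m + 4 ≠ 1 by omega, show m + 4 ≠ 2 by omega, show m + 4 ≠ 3 by omega]
  have h4 : ((m:ℚ) + 4) ≠ 0 := by positivity
  have h3 : ((m:ℚ) + 3) ≠ 0 := by positivity
  have h2 : ((m:ℚ) + 2) ≠ 0 := by positivity
  push_cast
  field_simp
  ring

theorem PP_map (f : ℚ →+* ℝ) (p : ℚ[X]) : (PP p).map f = PP (p.map f) := by
  have hev2 : (pint (p.map f)).eval 1 = f ((pint p).eval 1) := by
    rw [← pint_map, Polynomial.eval_one_map]
  simp only [PP_def, Polynomial.map_add, Polynomial.map_sub, Polynomial.map_mul,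
    Polynomial.map_one, Polynomial.map_X, Polynomial.map_C, Polynomial.map_pow,
    pint_map, hev2, map_div₀, map_ofNat]

theorem PP_natDegree_le (p : ℚ[X]) : natDegree (PP p) ≤ natDegree p + 3 := by
  rw [natDegree_le_iff_coeff_eq_zero]
  intro N hN
  obtain ⟨m, rfl⟩ : ∃ m, N = m + 4 := ⟨N - 4, by omega⟩
  rw [PP_coeff_ge]
  rw [coeff_eq_zero_of_natDegree_lt (by omega), coeff_eq_zero_of_natDegree_lt (by omega),
    coeff_eq_zero_of_natDegree_lt (by omega)]
  ring

theorem poly_eq_of_aeval_eq (P Q : ℚ[X])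
    (h : ∀ x ∈ Set.Icc (0:ℝ) 1, (Polynomial.aeval x) P = (Polynomial.aeval x) Q) :
    P = Q := by
  have hmap : P.map (algebraMap ℚ ℝ) = Q.map (algebraMap ℚ ℝ) := by
    have hz : (P.map (algebraMap ℚ ℝ) - Q.map (algebraMap ℚ ℝ)) = 0 := by
      apply Polynomial.eq_zero_of_infinite_isRoot
      refine Set.Infinite.mono ?_ (Set.Icc_infinite (show (0:ℝ) < 1 by norm_num))
      intro x hx
      simp only [Set.mem_setOf_eq, IsRoot, eval_sub, sub_eq_zero]
      have := h x hx
      rwa [aeval_def, aeval_def, ← eval_map, ← eval_map] at this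
    exact sub_eq_zero.mp hz
  exact Polynomial.map_injective _ (algebraMap ℚ ℝ).injective hmap

theorem pint_eval_one (p : ℚ[X]) {d : ℕ} (hd : p.natDegree ≤ d) (h0 : p.coeff 0 = 0) :
    (pint p).eval 1 = ∑ j ∈ Finset.Icc 1 d, p.coeff j / ((j : ℚ) + 1) := by
  have hdeg : (pint p).natDegree < d + 2 := by
    have : (pint p).natDegree ≤ d + 1 := by
      rw [natDegree_le_iff_coeff_eq_zero]
      intro N hN
      rw [pint_coeff]
      rcases N with _ | M
      · simp
      · simp only [Nat.succ_ne_zero, if_false]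
        rw [coeff_eq_zero_of_natDegree_lt (by omega)]
        simp
    omega
  rw [Polynomial.eval_eq_sum_range' hdeg]
  simp only [one_pow, mul_one, pint_coeff]
  rw [Finset.sum_range_succ']
  simp only [Nat.add_sub_cancel, Nat.succ_ne_zero, if_false, if_pos rfl]
  rw [if_pos trivial, add_zero, Finset.sum_range_succ']
  rw [h0]
  norm_num
  rw [← Finset.Ico_add_one_right_eq_Icc, Finset.sum_Ico_eq_sum_range]
  apply Finset.sum_congr (by norm_num)
  intro i _
  push_cast
  ring_nf

/-- Recursion for the coefficients `α_{k,i} = (q k).coeff i` in the four-species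
Bak–Sneppen coefficient setup. -/
theorem bs4_coefficient_recursion
    (q : ℕ → Polynomial ℚ)
    (hq1 : q 1 = X - X ^ 2 + C (1/3 : ℚ) * X ^ 3)
    (hrec : ∀ k, 1 ≤ k → ∀ x ∈ Set.Icc (0 : ℝ) 1,
      (Polynomial.aeval x) (q (k + 1)) =
        ∫ ξ₁ in (0:ℝ)..1, ∫ ξ₂ in (0:ℝ)..1, ∫ ξ₃ in (0:ℝ)..1,
          if ξ₂ < min ξ₁ (min ξ₃ x) then
            (Polynomial.aeval x) (q k) + (Polynomial.aeval ξ₁) (q k)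
              + (Polynomial.aeval ξ₂) (q k) + (Polynomial.aeval ξ₃) (q k)
          else 0)
    (k : ℕ) (hk : 1 ≤ k) :
    (q (k + 1)).coeff 0 = 0
    ∧ (q (k + 1)).coeff 1 = 2 * ∑ j ∈ Finset.Icc 1 (3 * k + 1), (q k).coeff j / ((j : ℚ) + 1)
    ∧ (q (k + 1)).coeff 2 =
        (3/2) * (q k).coeff 1 - ∑ j ∈ Finset.Icc 1 (3 * k + 1), (q k).coeff j / ((j : ℚ) + 1)
    ∧ (q (k + 1)).coeff 3 = -2 * (q k).coeff 1 + (4/3) * (q k).coeff 2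
    ∧ ∀ i, 4 ≤ i →
        (q (k + 1)).coeff i =
          ((i : ℚ) + 1) / (i : ℚ) * (q k).coeff (i - 1)
            - ((i : ℚ) + 1) / ((i : ℚ) - 1) * (q k).coeff (i - 2)
            + (1/3) * (((i : ℚ) + 1) / ((i : ℚ) - 2)) * (q k).coeff (i - 3) := by
  have haeval : ∀ (ξ : ℝ) (p : ℚ[X]),
      (Polynomial.aeval ξ) p = Polynomial.eval ξ (p.map (algebraMap ℚ ℝ)) := by
    intro ξ p
    rw [aeval_def, ← eval_map]
  have hstep : ∀ j, 1 ≤ j → q (j + 1) = PP (q j) := by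
    intro j hj
    apply poly_eq_of_aeval_eq
    intro x hx
    rw [hrec j hj x hx]
    simp only [haeval]
    rw [key ((q j).map (algebraMap ℚ ℝ)) hx, ← PP_map]
  have hfacts : ∀ j, 1 ≤ j → (q j).coeff 0 = 0 ∧ (q j).natDegree ≤ 3 * j + 1 := by
    intro j hj
    induction j with
    | zero => omega
    | succ m ih =>
      by_cases hm : 1 ≤ m
      · obtain ⟨ih0, ihd⟩ := ih hm
        rw [hstep m hm]
        refine ⟨PP_coeff_zero _, le_trans (PP_natDegree_le _) (by omega)⟩
      · have hm0 : m = 0 := by omega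
        subst hm0
        constructor
        · rw [hq1]
          simp
        · rw [hq1]
          have : ((X : ℚ[X]) - X ^ 2 + C (1/3 : ℚ) * X ^ 3).natDegree ≤ 3 := by
            compute_degree
          omega
  obtain ⟨h0, hdeg⟩ := hfacts k hk
  have hq' : q (k + 1) = PP (q k) := hstep k hk
  have hA : (pint (q k)).eval 1 = ∑ j ∈ Finset.Icc 1 (3 * k + 1), (q k).coeff j / ((j : ℚ) + 1) :=
    pint_eval_one (q k) hdeg h0
  rw [hq']
  refine ⟨PP_coeff_zero _, ?_, ?_, ?_, ?_⟩
  · rw [PP_coeff_one, hA, h0]; ring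
  · rw [PP_coeff_two, hA, h0]; ring
  · rw [PP_coeff_three, h0]; ring
  · intro i hi
    obtain ⟨m, rfl⟩ : ∃ m, i = m + 4 := ⟨i - 4, by omega⟩
    rw [PP_coeff_ge]
    simp only [show m + 4 - 1 = m + 3 by omega, show m + 4 - 2 = m + 2 by omega,
      show m + 4 - 3 = m + 1 by omega]
    push_cast
    ring
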